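/- For an irreducible, positive recurrent Markov chain X on a countable (or finite) state space S with unique stationary distribution π, the detailed balance equation for return times holds: for all states x, y, π(x)·P_x(τ̄_y < τ̄_x) = π(y)·P_y(τ̄_x < τ̄_y), where τ̄_z denotes the first return time to z (infimum of t > 0 with X_t = z). -/

import Mathlib

open MeasureTheory
open scoped ENNReal

noncomputable section

/-- First return time of the trajectory `ω` to the set `A`:
`τ̄_A(ω) = inf {t > 0 : ω t ∈ A}`, valued in `ℕ∞` (it is `⊤` if the set is never revisited). -/
def returnTime {S : Type*} (A : Set S) (ω : ℕ → S) : ℕ∞ :=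
  sInf ((fun n : ℕ => (n : ℕ∞)) '' {n : ℕ | 0 < n ∧ ω n ∈ A})

set_option maxHeartbeats 1000000
set_option linter.unusedSectionVars false

section DBaux

variable {S : Type*} [Fintype S] [DecidableEq S]

def exxt {n : ℕ} (γ : Fin (n+1) → S) : ℕ → S :=
  fun i => γ ⟨min i n, Nat.lt_succ_of_le (min_le_right _ _)⟩
lemma exxt_eq {n : ℕ} (γ : Fin (n+1) → S) (i : ℕ) (h : i ≤ n) :
    exxt γ i = γ ⟨i, Nat.lt_succ_of_le h⟩ := by
  unfold exxt; congr 1; exact Fin.ext (min_eq_left h)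
def wt (p : S → S → ℝ) (n : ℕ) (δ : ℕ → S) : ℝ :=
  ∏ i ∈ Finset.range n, p (δ i) (δ (i+1))
def okp (x y s z : S) (n : ℕ) (γ : Fin (n+1) → S) : Prop :=
  γ 0 = s ∧ γ (Fin.last n) = z ∧
    ∀ i : Fin (n+1), 0 < (i : ℕ) → (i : ℕ) < n → γ i ≠ x ∧ γ i ≠ y
instance (x y s z : S) (n : ℕ) : DecidablePred (okp x y s z n) := fun γ => by
  unfold okp; infer_instance
def pathSum (p : S → S → ℝ) (x y s z : S) (n : ℕ) : ℝ :=
  ∑ γ : Fin (n+1) → S, if okp x y s z n γ then wt p n (exxt γ) else 0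

lemma wt_nonneg {p : S → S → ℝ} (hp0 : ∀ a b, 0 ≤ p a b) (n : ℕ) (δ : ℕ → S) :
    0 ≤ wt p n δ :=
  Finset.prod_nonneg fun _ _ => hp0 _ _

lemma pathSum_nonneg {p : S → S → ℝ} (hp0 : ∀ a b, 0 ≤ p a b) (x y s z : S) (n : ℕ) :
    0 ≤ pathSum p x y s z n :=
  Finset.sum_nonneg fun γ _ => by
    by_cases h : okp x y s z n γ <;> simp [h, wt_nonneg hp0]

lemma pathSum_one (p : S → S → ℝ) (x y s z : S) : pathSum p x y s z 1 = p s z := by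
  classical
  unfold pathSum
  rw [Finset.sum_eq_single (fun i : Fin 2 => if i = 0 then s else z)]
  · rw [if_pos]
    · unfold wt
      rw [Finset.prod_range_one, exxt_eq _ 0 (by norm_num), exxt_eq _ 1 (by norm_num)]
      simp
    · refine ⟨by simp, ?_, ?_⟩
      · show (if (Fin.last 1) = 0 then s else z) = z
        simp [Fin.last]
      · intro i hi hi'; omega
  · intro γ _ hne
    rw [if_neg]
    intro ⟨h0, h1, _⟩
    apply hne
    funext i
    fin_cases i
    · simpa using h0
    · simpa [Fin.last] using h1
  · intro h; simp at h

lemma snoc_wt (p : S → S → ℝ) {n : ℕ} (δ : Fin (n+2) → S) (z' : S) :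
    wt p (n+2) (exxt (Fin.snoc δ z')) =
      wt p (n+1) (exxt δ) * p (δ (Fin.last (n+1))) z' := by
  have hc : ∀ (i : ℕ) (h : i ≤ n+1), exxt (Fin.snoc δ z' : Fin (n+3) → S) i = exxt δ i := by
    intro i h
    rw [exxt_eq _ i (by omega), exxt_eq _ i h]
    have : (⟨i, Nat.lt_succ_of_le (by omega)⟩ : Fin (n+3)) =
        Fin.castSucc ⟨i, Nat.lt_succ_of_le h⟩ := rfl
    rw [this, Fin.snoc_castSucc]
  unfold wt
  rw [Finset.prod_range_succ]
  congr 1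
  · exact Finset.prod_congr rfl fun i hi => by
      rw [hc i (by simp at hi; omega), hc (i+1) (by simp at hi; omega)]
  · congr 1
    · rw [hc (n+1) le_rfl, exxt_eq _ (n+1) le_rfl]; rfl
    · rw [exxt_eq _ (n+2) le_rfl]
      have : (⟨n+2, Nat.lt_succ_of_le le_rfl⟩ : Fin (n+3)) = Fin.last (n+2) := rfl
      rw [this, Fin.snoc_last]

lemma snoc_okp (x y s z : S) {n : ℕ} (δ : Fin (n+2) → S) (z' : S) :
    okp x y s z (n+2) (Fin.snoc δ z') ↔
      (z' = z ∧ okp x y s (δ (Fin.last (n+1))) (n+1) δ ∧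
        (δ (Fin.last (n+1)) ≠ x ∧ δ (Fin.last (n+1)) ≠ y)) := by
  have h0 : (Fin.snoc δ z' : Fin (n+3) → S) 0 = δ 0 := by
    have : (0 : Fin (n+3)) = Fin.castSucc 0 := rfl
    rw [this, Fin.snoc_castSucc]
  have hl : (Fin.snoc δ z' : Fin (n+3) → S) (Fin.last (n+2)) = z' := Fin.snoc_last _ _
  have hcs : ∀ j : Fin (n+2), (Fin.snoc δ z' : Fin (n+3) → S) j.castSucc = δ j :=
    fun j => Fin.snoc_castSucc _ _ _
  constructor
  · rintro ⟨ha, hb, hcond⟩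
    have hint : ∀ j : Fin (n+2), 0 < (j:ℕ) → δ j ≠ x ∧ δ j ≠ y := by
      intro j hj
      have := hcond j.castSucc (by rw [Fin.coe_castSucc]; exact hj)
        (by rw [Fin.coe_castSucc]; exact j.isLt)
      rwa [hcs j] at this
    refine ⟨by rw [← hl, hb], ⟨by rw [← h0, ha], rfl, fun j hj hj' => hint j hj⟩, ?_⟩
    exact hint (Fin.last (n+1)) (by simp [Fin.last])
  · rintro ⟨hz, ⟨ha, _, hint⟩, hlast⟩
    refine ⟨by rw [h0, ha], by rw [hl, hz], ?_⟩
    intro i hi hi'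
    set j : Fin (n+2) := ⟨(i:ℕ), by omega⟩ with hj
    have hij : i = j.castSucc := Fin.ext rfl
    rw [hij, hcs j]
    rcases Nat.lt_or_ge (j : ℕ) (n+1) with h | h
    · exact hint j hi h
    · have hjl : (j:ℕ) = n+1 := by have := j.isLt; omega
      have : j = Fin.last (n+1) := Fin.ext (by rw [Fin.val_last]; exact hjl)
      rw [this]; exact hlast

lemma pathSum_succ (p : S → S → ℝ) (x y s z : S) (n : ℕ) :
    pathSum p x y s z (n+2) =
      ∑ w ∈ Finset.univ.filter (fun w : S => w ≠ x ∧ w ≠ y),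
        pathSum p x y s w (n+1) * p w z := by
  classical
  have LHS : pathSum p x y s z (n+2) =
      ∑ q : S × (Fin (n+2) → S),
        if okp x y s z (n+2) (Fin.snoc q.2 q.1) then wt p (n+2) (exxt (Fin.snoc q.2 q.1)) else 0 := by
    unfold pathSum
    rw [← Equiv.sum_comp (Fin.snocEquiv (fun _ => S))]
    rfl
  rw [LHS, Fintype.sum_prod_type_right]
  -- now sum over δ, inner over z'
  have step1 : ∀ δ : Fin (n+2) → S,
      (∑ z' : S, if okp x y s z (n+2) (Fin.snoc δ z') then wt p (n+2) (exxt (Fin.snoc δ z')) else 0)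
      = if (okp x y s (δ (Fin.last (n+1))) (n+1) δ ∧
            (δ (Fin.last (n+1)) ≠ x ∧ δ (Fin.last (n+1)) ≠ y)) then
          wt p (n+1) (exxt δ) * p (δ (Fin.last (n+1))) z else 0 := by
    intro δ
    rw [Finset.sum_eq_single z]
    · rw [snoc_wt]
      by_cases h : okp x y s (δ (Fin.last (n+1))) (n+1) δ ∧
          (δ (Fin.last (n+1)) ≠ x ∧ δ (Fin.last (n+1)) ≠ y)
      · rw [if_pos, if_pos h]
        rw [snoc_okp]; exact ⟨rfl, h.1, h.2⟩
      · rw [if_neg, if_neg h]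
        rw [snoc_okp]; intro ⟨_, h1, h2⟩; exact h ⟨h1, h2⟩
    · intro b _ hb
      rw [if_neg]
      rw [snoc_okp]; intro ⟨h1, _⟩; exact hb h1
    · intro h; simp at h
  simp only [step1]
  -- RHS
  have RHS : ∀ δ : Fin (n+2) → S,
      (if (okp x y s (δ (Fin.last (n+1))) (n+1) δ ∧
            (δ (Fin.last (n+1)) ≠ x ∧ δ (Fin.last (n+1)) ≠ y)) then
          wt p (n+1) (exxt δ) * p (δ (Fin.last (n+1))) z else 0)
      = ∑ w ∈ Finset.univ.filter (fun w : S => w ≠ x ∧ w ≠ y),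
          (if okp x y s w (n+1) δ then wt p (n+1) (exxt δ) * p w z else 0) := by
    intro δ
    by_cases hmem : δ (Fin.last (n+1)) ∈ Finset.univ.filter (fun w : S => w ≠ x ∧ w ≠ y)
    · rw [Finset.sum_eq_single_of_mem _ hmem]
      · simp only [Finset.mem_filter, Finset.mem_univ, true_and] at hmem
        by_cases h : okp x y s (δ (Fin.last (n+1))) (n+1) δ
        · rw [if_pos h, if_pos ⟨h, hmem⟩]
        · rw [if_neg h, if_neg (fun hh => h hh.1)]
      · intro w _ hw
        rw [if_neg]
        intro ⟨_, hb, _⟩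
        exact hw (hb ▸ rfl)
    · simp only [Finset.mem_filter, Finset.mem_univ, true_and] at hmem
      rw [if_neg (fun hh => hmem hh.2), Finset.sum_eq_zero]
      intro w hw
      simp only [Finset.mem_filter, Finset.mem_univ, true_and] at hw
      rw [if_neg]
      intro ⟨_, hb, _⟩
      exact hmem (hb ▸ hw)
  simp only [RHS]
  rw [Finset.sum_comm]
  unfold pathSum
  congr 1
  funext w
  rw [Finset.sum_mul]
  congr 1
  funext δ
  rw [ite_mul, zero_mul]


section RT

lemma rt_le {z : S} {ω : ℕ → S} {m : ℕ} (hm : 0 < m) (h : ω m = z) :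
    returnTime {z} ω ≤ (m : ℕ∞) :=
  sInf_le ⟨m, ⟨hm, h⟩, rfl⟩

lemma rt_gt {z : S} {ω : ℕ → S} {m : ℕ} (h : ∀ n, 0 < n → ω n = z → m < n) :
    (m : ℕ∞) < returnTime {z} ω := by
  have h1 : ((m+1 : ℕ) : ℕ∞) ≤ returnTime {z} ω := by
    refine le_sInf ?_
    rintro b ⟨n, ⟨hn, hz⟩, rfl⟩
    show ((m+1 : ℕ) : ℕ∞) ≤ (n : ℕ∞)
    exact_mod_cast h n hn hz
  calc (m : ℕ∞) < ((m+1 : ℕ) : ℕ∞) := by exact_mod_cast Nat.lt_succ_self m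
  _ ≤ _ := h1

lemma rt_eq_top_iff {z : S} {ω : ℕ → S} :
    returnTime {z} ω = ⊤ ↔ ∀ n, 0 < n → ω n ≠ z := by
  unfold returnTime
  rw [sInf_eq_top]
  constructor
  · intro h n hn hz
    exact absurd (h _ ⟨n, ⟨hn, hz⟩, rfl⟩) (by simp)
  · rintro h b ⟨n, ⟨hn, hz⟩, rfl⟩
    exact absurd hz (h n hn)

lemma rt_ge {z : S} {ω : ℕ → S} {m : ℕ} (h : ∀ n, 0 < n → ω n = z → m ≤ n) :
    (m : ℕ∞) ≤ returnTime {z} ω := by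
  refine le_sInf ?_
  rintro b ⟨n, ⟨hn, hz⟩, rfl⟩
  show (m : ℕ∞) ≤ (n : ℕ∞)
  exact_mod_cast h n hn hz

/-- First-hitting event: avoids `{x,y}` strictly before `m`, at `z` at time `m`. -/
def Hset (x y z : S) (m : ℕ) : Set (ℕ → S) :=
  {ω | (∀ i, 0 < i → i < m → ω i ≠ x ∧ ω i ≠ y) ∧ ω m = z}

lemma event_eq {x y : S} (hxy : x ≠ y) :
    {ω : ℕ → S | returnTime {y} ω < returnTime {x} ω} = ⋃ k : ℕ, Hset x y y (k+1) := by
  classical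
  ext ω
  simp only [Set.mem_setOf_eq, Set.mem_iUnion]
  constructor
  · intro h
    have hne : returnTime {y} ω ≠ ⊤ := (h.trans_le le_top).ne
    have hex : ∃ n, 0 < n ∧ ω n = y := by
      by_contra hc
      push_neg at hc
      exact hne (rt_eq_top_iff.2 fun n hn => hc n hn)
    set m := Nat.find hex with hm
    obtain ⟨hm0, hmy⟩ := Nat.find_spec hex
    have hretle : returnTime {y} ω ≤ (m : ℕ∞) := rt_le hm0 hmy
    have hretge : (m : ℕ∞) ≤ returnTime {y} ω :=
      rt_ge fun n hn hz => Nat.find_min' hex ⟨hn, hz⟩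
    refine ⟨m - 1, ?_⟩
    have hm1 : m - 1 + 1 = m := Nat.succ_pred_eq_of_pos hm0
    rw [hm1]
    refine ⟨fun i hi him => ⟨?_, ?_⟩, hmy⟩
    · intro hx
      have hlt : returnTime {x} ω ≤ (i : ℕ∞) := rt_le hi hx
      have : returnTime {y} ω < (i : ℕ∞) := lt_of_lt_of_le h hlt
      have : (m : ℕ∞) < (i : ℕ∞) := lt_of_le_of_lt hretge this
      have : m < i := by exact_mod_cast this
      omega
    · intro hy
      exact absurd (⟨hi, hy⟩ : 0 < i ∧ ω i = y) (Nat.find_min hex him)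
  · rintro ⟨k, havoid, hk⟩
    have h1 : returnTime {y} ω ≤ ((k+1 : ℕ) : ℕ∞) := rt_le (Nat.succ_pos k) hk
    have h2 : ((k+1 : ℕ) : ℕ∞) < returnTime {x} ω := by
      refine rt_gt fun n hn hz => ?_
      by_contra hc
      push_neg at hc
      rcases Nat.lt_or_ge n (k+1) with h | h
      · exact (havoid n hn h).1 hz
      · have : n = k + 1 := le_antisymm hc h
        rw [this, hk] at hz
        exact hxy hz.symm
    exact lt_of_le_of_lt h1 h2

lemma cover_eq {x y : S} {ω : ℕ → S} (h : returnTime {x} ω ≠ ⊤) :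
    ω ∈ (⋃ k : ℕ, Hset x y x (k+1)) ∪ ⋃ k : ℕ, Hset x y y (k+1) := by
  classical
  have hex : ∃ n, 0 < n ∧ (ω n = x ∨ ω n = y) := by
    by_contra hc
    push_neg at hc
    exact h (rt_eq_top_iff.2 fun n hn => fun hz => (hc n hn).1 hz)
  set m := Nat.find hex with hm
  obtain ⟨hm0, hmxy⟩ := Nat.find_spec hex
  have havoid : ∀ i, 0 < i → i < m → ω i ≠ x ∧ ω i ≠ y := by
    intro i hi him
    have := Nat.find_min hex him
    push_neg at this
    exact this hi
  have hm1 : m - 1 + 1 = m := Nat.succ_pred_eq_of_pos hm0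
  rcases hmxy with hx | hy
  · exact Or.inl (Set.mem_iUnion.2 ⟨m - 1, by rw [hm1]; exact ⟨havoid, hx⟩⟩)
  · exact Or.inr (Set.mem_iUnion.2 ⟨m - 1, by rw [hm1]; exact ⟨havoid, hy⟩⟩)

lemma Hset_disj {x y : S} (hxy : x ≠ y) {z z' : S} {k k' : ℕ}
    (hz : z = x ∨ z = y) (hz' : z' = x ∨ z' = y)
    (h : (k, z) ≠ (k', z')) :
    Disjoint (Hset x y z (k+1)) (Hset x y z' (k'+1)) := by
  rw [Set.disjoint_left]
  rintro ω ⟨hav, hz1⟩ ⟨hav', hz1'⟩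
  rcases Nat.lt_trichotomy k k' with hlt | heq | hgt
  · have := hav' (k+1) (Nat.succ_pos k) (by omega)
    rcases hz with rfl | rfl
    · exact this.1 hz1
    · exact this.2 hz1
  · subst heq
    apply h
    rw [hz1] at hz1'
    rw [hz1']
  · have := hav (k'+1) (Nat.succ_pos k') (by omega)
    rcases hz' with rfl | rfl
    · exact this.1 hz1'
    · exact this.2 hz1'

end RT

lemma allMeasurable {S : Type*} [Fintype S] [DecidableEq S] [MeasurableSpace S]
    (p : S → S → ℝ)
    (P : S → Measure (ℕ → S))
    (hcyl : ∀ (x : S) (γ : ℕ → S) (n : ℕ),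
      P x {ω | ∀ i ≤ n, ω i = γ i} =
        if γ 0 = x then ENNReal.ofReal (∏ i ∈ Finset.range n, p (γ i) (γ (i+1))) else 0) :
    ∀ t : Set S, MeasurableSet t := by
  by_contra hcon
  push_neg at hcon
  -- first: find two indistinguishable points a ≠ b
  have hex : ∃ a b : S, a ≠ b ∧ ∀ E : Set S, MeasurableSet E → (a ∈ E ↔ b ∈ E) := by
    by_contra hsep
    push_neg at hsep
    have hsep' : ∀ a b : S, a ≠ b → ∃ E : Set S, MeasurableSet E ∧ a ∈ E ∧ b ∉ E := by
      intro a b hab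
      obtain ⟨E, hE, hiff⟩ := hsep a b hab
      rcases hiff with ⟨ha, hb⟩ | ⟨ha, hb⟩
      · exact ⟨E, hE, ha, hb⟩
      · exact ⟨Eᶜ, hE.compl, ha, fun h => h hb⟩
    choose E hEmeas hEa hEb using hsep'
    have hsingle : ∀ a : S, MeasurableSet ({a} : Set S) := by
      intro a
      have : ({a} : Set S) = ⋂ (b : S) (h : b ≠ a), E a b h.symm := by
        ext c
        simp only [Set.mem_singleton_iff, Set.mem_iInter]
        constructor
        · rintro rfl b hb; exact hEa c b hb.symm
        · intro h
          by_contra hc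
          exact hEb a c (Ne.symm hc) (h c hc)
      rw [this]
      exact MeasurableSet.iInter fun b => MeasurableSet.iInter fun h => hEmeas _ _ _
    obtain ⟨t, ht⟩ := hcon
    exact ht (by
      have : t = ⋃ (a : S) (h : a ∈ t), ({a} : Set S) := by simp
      rw [this]
      exact MeasurableSet.iUnion fun a => MeasurableSet.iUnion fun h => hsingle a)
  obtain ⟨a, b, hab, hAtom⟩ := hex
  -- swap map
  set σ := Equiv.swap a b with hσ
  have hσE : ∀ E : Set S, MeasurableSet E → σ ⁻¹' E = E := by
    intro E hE
    ext c
    simp only [Set.mem_preimage]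
    rcases eq_or_ne c a with rfl | hca
    · rw [Equiv.swap_apply_left]; exact (hAtom E hE).symm
    · rcases eq_or_ne c b with rfl | hcb
      · rw [Equiv.swap_apply_right]; exact hAtom E hE
      · rw [Equiv.swap_apply_of_ne_of_ne hca hcb]
  set f : (ℕ → S) → (ℕ → S) := fun ω i => σ (ω i) with hf
  have hft : ∀ t : Set (ℕ → S), MeasurableSet t → f ⁻¹' t = t := by
    intro t ht
    let m' : MeasurableSpace (ℕ → S) :=
      { MeasurableSet' := fun u => f ⁻¹' u = u
        measurableSet_empty := by simp
        measurableSet_compl := fun u hu => by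
          simp only [Set.preimage_compl] at *
          rw [hu]
        measurableSet_iUnion := fun g hg => by
          simp only [Set.preimage_iUnion] at *
          simp only [hg] }
    have hle : (MeasurableSpace.pi : MeasurableSpace (ℕ → S)) ≤ m' := by
      rw [MeasurableSpace.pi]
      refine iSup_le fun i => ?_
      intro u hu
      obtain ⟨E, hE, rfl⟩ := hu
      show f ⁻¹' ((fun ω : ℕ → S => ω i) ⁻¹' E) = _
      have : f ⁻¹' ((fun ω : ℕ → S => ω i) ⁻¹' E) = (fun ω : ℕ → S => ω i) ⁻¹' (σ ⁻¹' E) := rfl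
      rw [this, hσE E hE]
    exact hle t ht
  -- contradiction via cylinder measures
  have h1 : P a {ω : ℕ → S | ω 0 = a} = 1 := by
    have := hcyl a (fun _ => a) 0
    simp only [Nat.le_zero] at this
    simpa using this
  have h0 : P a {ω : ℕ → S | ω 0 = b} = 0 := by
    have := hcyl a (fun _ => b) 0
    simp only [Nat.le_zero] at this
    rw [if_neg hab.symm] at this
    simpa using this
  have h2 : (1 : ENNReal) ≤ P a {ω : ℕ → S | ω 0 = b} := by
    rw [measure_eq_iInf]
    refine le_iInf fun t => le_iInf fun hsub => le_iInf fun hmeas => ?_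
    rw [← h1]
    refine measure_mono fun ω hω => ?_
    have hfω : f ω ∈ {ω : ℕ → S | ω 0 = b} := by
      show σ (ω 0) = b
      rw [hω, Equiv.swap_apply_left]
    have h3 : ω ∈ f ⁻¹' t := hsub hfω
    rwa [hft t hmeas] at h3
  rw [h0] at h2
  exact absurd h2 (by simp)


section Meas
variable [MeasurableSpace S]
variable (p : S → S → ℝ) (P : S → Measure (ℕ → S))

lemma Hset_meas (hS : ∀ t : Set S, MeasurableSet t) (x y z : S) (m : ℕ) :
    MeasurableSet (Hset x y z m) := by
  have heq : Hset x y z m =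
      (⋂ (i : ℕ), ⋂ (_ : 0 < i), ⋂ (_ : i < m),
        (fun ω : ℕ → S => ω i) ⁻¹' {w : S | w ≠ x ∧ w ≠ y}) ∩
      ((fun ω : ℕ → S => ω m) ⁻¹' {z}) := by
    ext ω
    simp only [Hset, Set.mem_setOf_eq, Set.mem_inter_iff, Set.mem_iInter, Set.mem_preimage,
      Set.mem_singleton_iff]
  rw [heq]
  exact (MeasurableSet.iInter fun i => MeasurableSet.iInter fun _ =>
    MeasurableSet.iInter fun _ => (measurable_pi_apply i) (hS _)).inter
    ((measurable_pi_apply m) (hS _))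

lemma Hset_comm (x y z : S) (m : ℕ) : Hset x y z m = Hset y x z m := by
  ext ω
  simp only [Hset, Set.mem_setOf_eq]
  constructor <;> rintro ⟨h1, h2⟩ <;>
    exact ⟨fun i hi him => ⟨(h1 i hi him).2, (h1 i hi him).1⟩, h2⟩

lemma start_compl_null (hP : ∀ x, IsProbabilityMeasure (P x))
    (hcyl : ∀ (x : S) (γ : ℕ → S) (n : ℕ),
      P x {ω | ∀ i ≤ n, ω i = γ i} =
        if γ 0 = x then ENNReal.ofReal (∏ i ∈ Finset.range n, p (γ i) (γ (i+1))) else 0)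
    (hS : ∀ t : Set S, MeasurableSet t) (s : S) :
    P s ({ω : ℕ → S | ω 0 = s}ᶜ) = 0 := by
  haveI := hP s
  have h1 : P s {ω : ℕ → S | ω 0 = s} = 1 := by
    have := hcyl s (fun _ => s) 0
    simp only [Nat.le_zero] at this
    simpa using this
  have hm : MeasurableSet {ω : ℕ → S | ω 0 = s} := by
    have heq : {ω : ℕ → S | ω 0 = s} = (fun ω : ℕ → S => ω 0) ⁻¹' {s} := rfl
    rw [heq]; exact (measurable_pi_apply 0) (hS _)
  rw [measure_compl hm (measure_ne_top _ _), h1, measure_univ]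
  simp

lemma measure_Hset (hp0 : ∀ a b, 0 ≤ p a b)
    (hP : ∀ x, IsProbabilityMeasure (P x))
    (hcyl : ∀ (x : S) (γ : ℕ → S) (n : ℕ),
      P x {ω | ∀ i ≤ n, ω i = γ i} =
        if γ 0 = x then ENNReal.ofReal (∏ i ∈ Finset.range n, p (γ i) (γ (i+1))) else 0)
    (hS : ∀ t : Set S, MeasurableSet t) (x y s z : S) (n : ℕ) :
    P s (Hset x y z (n+1)) = ENNReal.ofReal (pathSum p x y s z (n+1)) := by
  classical
  set F : Set (ℕ → S) := {ω | ω 0 = s} with hF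
  set G : Finset (Fin (n+2) → S) := Finset.univ.filter (okp x y s z (n+1)) with hG
  set Cyl : (Fin (n+2) → S) → Set (ℕ → S) :=
    fun γ => {ω | ∀ i ≤ n+1, ω i = exxt γ i} with hCyl
  have hdecomp : Hset x y z (n+1) ∩ F = ⋃ γ ∈ G, Cyl γ := by
    ext ω
    simp only [Set.mem_inter_iff, Set.mem_iUnion, hF, Set.mem_setOf_eq, Hset, hCyl, hG,
      Finset.mem_filter, Finset.mem_univ, true_and]
    constructor
    · rintro ⟨⟨hav, hz⟩, h0⟩
      refine ⟨fun i : Fin (n+2) => ω i.1, ⟨h0, hz, ?_⟩, ?_⟩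
      · intro i hi hi'
        exact hav i.1 hi hi'
      · intro i hi
        rw [exxt_eq _ i hi]
    · rintro ⟨γ, ⟨h0, hl, hav⟩, hcylmem⟩
      refine ⟨⟨?_, ?_⟩, ?_⟩
      · intro i hi hi'
        rw [hcylmem i (by omega), exxt_eq _ i (by omega)]
        exact hav ⟨i, by omega⟩ hi hi'
      · rw [hcylmem (n+1) le_rfl, exxt_eq _ (n+1) le_rfl]
        exact hl
      · rw [hcylmem 0 (by omega), exxt_eq _ 0 (by omega)]
        exact h0
  have hstart : P s (Hset x y z (n+1)) = P s (Hset x y z (n+1) ∩ F) := by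
    have hmF : MeasurableSet F := by
      have heq : F = (fun ω : ℕ → S => ω 0) ⁻¹' {s} := rfl
      rw [heq]; exact (measurable_pi_apply 0) (hS _)
    have h1 := measure_inter_add_diff (μ := P s) (Hset x y z (n+1)) hmF
    have h2 : P s (Hset x y z (n+1) \ F) = 0 := by
      refine le_antisymm ?_ zero_le
      calc P s (Hset x y z (n+1) \ F) ≤ P s Fᶜ := measure_mono fun ω hω => hω.2
      _ = 0 := start_compl_null p P hP hcyl hS s
    rw [← h1, h2, add_zero]
  rw [hstart, hdecomp]
  have hdisj : (↑G : Set (Fin (n+2) → S)).PairwiseDisjoint Cyl := by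
    intro γ _ γ' _ hne
    rw [Function.onFun, Set.disjoint_left]
    intro ω hω hω'
    apply hne
    funext j
    have h1 : ω j.1 = exxt γ j.1 := hω j.1 (by omega)
    have h2 : ω j.1 = exxt γ' j.1 := hω' j.1 (by omega)
    have e1 : exxt γ j.1 = γ j := by rw [exxt_eq _ j.1 (by omega)]
    have e2 : exxt γ' j.1 = γ' j := by rw [exxt_eq _ j.1 (by omega)]
    rw [← e1, ← h1, h2, e2]
  rw [measure_biUnion_finset hdisj fun γ _ => ?_]
  · have hterm : ∀ γ ∈ G, P s (Cyl γ) = ENNReal.ofReal (wt p (n+1) (exxt γ)) := by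
      intro γ hγ
      simp only [hG, Finset.mem_filter, Finset.mem_univ, true_and] at hγ
      have := hcyl s (exxt γ) (n+1)
      rw [if_pos] at this
      · exact this
      · rw [exxt_eq _ 0 (by omega)]
        exact hγ.1
    rw [Finset.sum_congr rfl hterm, ← ENNReal.ofReal_sum_of_nonneg
      (fun γ _ => wt_nonneg hp0 _ _)]
    congr 1
    unfold pathSum
    rw [hG, Finset.sum_filter]
  · have heq : Cyl γ = ⋂ (i : ℕ), ⋂ (_ : i ≤ n+1),
        (fun ω : ℕ → S => ω i) ⁻¹' {exxt γ i} := by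
      ext ω
      simp only [hCyl, Set.mem_setOf_eq, Set.mem_iInter, Set.mem_preimage,
        Set.mem_singleton_iff]
    rw [heq]
    exact MeasurableSet.iInter fun i => MeasurableSet.iInter fun _ =>
      (measurable_pi_apply i) (hS _)

lemma ret_top_null (hS : ∀ t : Set S, MeasurableSet t) (s : S)
    (hrec : ∫⁻ ω, ((returnTime {s} ω : ℕ∞) : ℝ≥0∞) ∂ P s < ⊤) :
    P s {ω : ℕ → S | returnTime {s} ω = ⊤} = 0 := by
  set N : Set (ℕ → S) := {ω | returnTime {s} ω = ⊤} with hN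
  have hNm : MeasurableSet N := by
    have heq : N = ⋂ n : ℕ, (fun ω : ℕ → S => ω (n+1)) ⁻¹' {w : S | w ≠ s} := by
      ext ω
      simp only [hN, Set.mem_setOf_eq, Set.mem_iInter, Set.mem_preimage, rt_eq_top_iff]
      constructor
      · intro h n; exact h (n+1) (Nat.succ_pos n)
      · intro h n hn
        obtain ⟨m, rfl⟩ := Nat.exists_eq_add_of_lt hn
        simpa using h m
    rw [heq]
    exact MeasurableSet.iInter fun n => (measurable_pi_apply (n+1)) (hS _)
  by_contra hne
  have hbound : N.indicator (fun _ => (⊤ : ℝ≥0∞)) ≤ fun ω => ((returnTime {s} ω : ℕ∞) : ℝ≥0∞) := by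
    intro ω
    by_cases hω : ω ∈ N
    · rw [Set.indicator_of_mem hω]
      have h2 : returnTime {s} ω = ⊤ := hω
      show (⊤ : ℝ≥0∞) ≤ ((returnTime {s} ω : ℕ∞) : ℝ≥0∞)
      rw [h2]
      simp
    · rw [Set.indicator_of_notMem hω]
      exact zero_le
  have h1 : (⊤ : ℝ≥0∞) * P s N ≤ ∫⁻ ω, ((returnTime {s} ω : ℕ∞) : ℝ≥0∞) ∂ P s := by
    calc (⊤ : ℝ≥0∞) * P s N = ∫⁻ ω in N, ⊤ ∂ P s := (setLIntegral_const N ⊤).symm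
    _ = ∫⁻ ω, N.indicator (fun _ => (⊤:ℝ≥0∞)) ω ∂ P s := (lintegral_indicator hNm _).symm
    _ ≤ _ := lintegral_mono hbound
  rw [ENNReal.top_mul hne] at h1
  exact absurd (lt_of_le_of_lt h1 hrec) (lt_irrefl ⊤)

def Rfun (p : S → S → ℝ) (π : S → ℝ) (A : Finset S) : ℕ → S → ℝ
  | 0 => π
  | (n+1) => fun z => ∑ w ∈ A, Rfun p π A n w * p w z

lemma Rfun_nonneg {p : S → S → ℝ} {π : S → ℝ} (hp0 : ∀ a b, 0 ≤ p a b)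
    (hπ0 : ∀ a, 0 ≤ π a) (A : Finset S) : ∀ (n : ℕ) (z : S), 0 ≤ Rfun p π A n z
  | 0, z => hπ0 z
  | (n+1), z => Finset.sum_nonneg fun w _ =>
      mul_nonneg (Rfun_nonneg hp0 hπ0 A n w) (hp0 w z)

lemma key_ineq
    (hp0 : ∀ a b, 0 ≤ p a b)
    (hP : ∀ x, IsProbabilityMeasure (P x))
    (hcyl : ∀ (x : S) (γ : ℕ → S) (n : ℕ),
      P x {ω | ∀ i ≤ n, ω i = γ i} =
        if γ 0 = x then ENNReal.ofReal (∏ i ∈ Finset.range n, p (γ i) (γ (i+1))) else 0)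
    (π : S → ℝ) (hπ0 : ∀ a, 0 ≤ π a)
    (hstat : ∀ z, ∑ w, π w * p w z = π z)
    (x y : S) (hxy : x ≠ y)
    (hrecx : ∫⁻ ω, ((returnTime {x} ω : ℕ∞) : ℝ≥0∞) ∂ P x < ⊤) :
    ENNReal.ofReal (π y) * P y {ω | returnTime {x} ω < returnTime {y} ω} ≤
      ENNReal.ofReal (π x) * P x {ω | returnTime {y} ω < returnTime {x} ω} := by
  classical
  have hS := allMeasurable p P hcyl
  haveI := hP x
  haveI := hP y
  set A : Finset S := Finset.univ.filter (fun w : S => w ≠ x ∧ w ≠ y) with hA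
  set ρ : ℕ → S → ℝ := fun k z =>
    π x * pathSum p x y x z (k+1) + π y * pathSum p x y y z (k+1) with hρ
  have hρnn : ∀ k z, 0 ≤ ρ k z := fun k z =>
    add_nonneg (mul_nonneg (hπ0 x) (pathSum_nonneg hp0 _ _ _ _ _))
      (mul_nonneg (hπ0 y) (pathSum_nonneg hp0 _ _ _ _ _))
  -- stationarity split
  have hsplit : ∀ z, π z = π x * p x z + π y * p y z + ∑ w ∈ A, π w * p w z := by
    intro z
    have h1 := hstat z
    rw [← Finset.sum_filter_add_sum_filter_not Finset.univ
      (fun w : S => w ≠ x ∧ w ≠ y) (fun w => π w * p w z)] at h1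
    have h2 : Finset.univ.filter (fun w : S => ¬(w ≠ x ∧ w ≠ y)) = {x, y} := by
      ext w
      simp only [Finset.mem_filter, Finset.mem_univ, true_and, Finset.mem_insert,
        Finset.mem_singleton]
      tauto
    rw [h2, Finset.sum_pair hxy, ← hA] at h1
    linarith
  -- one-step recursion for ρ
  have step : ∀ k z, ∑ w ∈ A, ρ k w * p w z = ρ (k+1) z := by
    intro k z
    rw [hρ]
    simp only
    rw [pathSum_succ p x y x z k, pathSum_succ p x y y z k, ← hA,
      Finset.mul_sum, Finset.mul_sum, ← Finset.sum_add_distrib]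
    refine Finset.sum_congr rfl fun w _ => by ring
  -- telescoping identity
  have tele : ∀ (n : ℕ) (z : S),
      π z = (∑ k ∈ Finset.range n, ρ k z) + Rfun p π A n z := by
    intro n
    induction n with
    | zero => intro z; simp [Rfun]
    | succ n ih =>
      intro z
      have e1 : π z = ρ 0 z + ∑ w ∈ A, ((∑ k ∈ Finset.range n, ρ k w) + Rfun p π A n w) * p w z := by
        rw [hsplit z]
        congr 1
        · rw [hρ]; simp only [zero_add, pathSum_one]
        · exact Finset.sum_congr rfl fun w _ => by rw [← ih w]
      have e2 : ∑ w ∈ A, ((∑ k ∈ Finset.range n, ρ k w) + Rfun p π A n w) * p w z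
          = (∑ k ∈ Finset.range n, ρ (k+1) z) + Rfun p π A (n+1) z := by
        have e3 : ∀ w ∈ A, ((∑ k ∈ Finset.range n, ρ k w) + Rfun p π A n w) * p w z
            = (∑ k ∈ Finset.range n, ρ k w * p w z) + Rfun p π A n w * p w z := by
          intro w _
          rw [add_mul, Finset.sum_mul]
        rw [Finset.sum_congr rfl e3, Finset.sum_add_distrib, Finset.sum_comm]
        have e4 : ∀ k ∈ Finset.range n, ∑ w ∈ A, ρ k w * p w z = ρ (k+1) z :=
          fun k _ => step k z
        rw [Finset.sum_congr rfl e4]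
        rfl
      rw [e1, e2, Finset.sum_range_succ']
      ring
  have bound : ∀ n, ∑ k ∈ Finset.range n, ρ k x ≤ π x := by
    intro n
    have h := tele n x
    have h2 := Rfun_nonneg hp0 hπ0 A n x
    linarith
  -- measure identities
  set a : ℕ → ℝ := fun k => pathSum p x y x x (k+1) with ha
  set b : ℕ → ℝ := fun k => pathSum p x y x y (k+1) with hb
  set c : ℕ → ℝ := fun k => pathSum p x y y x (k+1) with hc
  have hmx : ∀ k : ℕ, MeasurableSet (Hset x y x (k+1)) := fun k => Hset_meas hS _ _ _ _
  have hmy : ∀ k : ℕ, MeasurableSet (Hset x y y (k+1)) := fun k => Hset_meas hS _ _ _ _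
  have hdx : Pairwise (Function.onFun Disjoint (fun k : ℕ => Hset x y x (k+1))) :=
    fun i j hij => Hset_disj hxy (Or.inl rfl) (Or.inl rfl) (by simp [hij])
  have hdy : Pairwise (Function.onFun Disjoint (fun k : ℕ => Hset x y y (k+1))) :=
    fun i j hij => Hset_disj hxy (Or.inr rfl) (Or.inr rfl) (by simp [hij])
  have hPx : P x {ω | returnTime {y} ω < returnTime {x} ω} = ∑' k, ENNReal.ofReal (b k) := by
    rw [event_eq hxy, measure_iUnion hdy hmy]
    exact tsum_congr fun k => measure_Hset p P hp0 hP hcyl hS x y x y k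
  have hPy : P y {ω | returnTime {x} ω < returnTime {y} ω} = ∑' k, ENNReal.ofReal (c k) := by
    have hev : {ω : ℕ → S | returnTime {x} ω < returnTime {y} ω} = ⋃ k, Hset x y x (k+1) := by
      rw [event_eq hxy.symm]
      exact Set.iUnion_congr fun k => (Hset_comm x y x (k+1)).symm
    rw [hev, measure_iUnion hdx hmx]
    exact tsum_congr fun k => measure_Hset p P hp0 hP hcyl hS x y y x k
  -- full mass identity under P x
  have hfull : (∑' k, ENNReal.ofReal (a k)) + (∑' k, ENNReal.ofReal (b k)) = 1 := by
    have hdxy : Disjoint (⋃ k : ℕ, Hset x y x (k+1)) (⋃ k : ℕ, Hset x y y (k+1)) :=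
      Set.disjoint_iUnion_left.2 fun i => Set.disjoint_iUnion_right.2 fun j =>
        Hset_disj hxy (Or.inl rfl) (Or.inr rfl) (by simp [hxy])
    have hU : P x ((⋃ k : ℕ, Hset x y x (k+1)) ∪ ⋃ k : ℕ, Hset x y y (k+1)) =
        (∑' k, P x (Hset x y x (k+1))) + ∑' k, P x (Hset x y y (k+1)) := by
      rw [measure_union hdxy (MeasurableSet.iUnion hmy), measure_iUnion hdx hmx,
        measure_iUnion hdy hmy]
    have hone : P x ((⋃ k : ℕ, Hset x y x (k+1)) ∪ ⋃ k : ℕ, Hset x y y (k+1)) = 1 := by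
      refine le_antisymm prob_le_one ?_
      have hN := ret_top_null P hS x hrecx
      calc (1 : ℝ≥0∞) = P x Set.univ := measure_univ.symm
      _ ≤ P x ((((⋃ k : ℕ, Hset x y x (k+1)) ∪ ⋃ k : ℕ, Hset x y y (k+1))) ∪
            {ω | returnTime {x} ω = ⊤}) := by
          refine measure_mono fun ω _ => ?_
          by_cases h : returnTime {x} ω = ⊤
          · exact Or.inr h
          · exact Or.inl (cover_eq h)
      _ ≤ P x ((⋃ k : ℕ, Hset x y x (k+1)) ∪ ⋃ k : ℕ, Hset x y y (k+1)) +
            P x {ω | returnTime {x} ω = ⊤} := measure_union_le _ _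
      _ = P x ((⋃ k : ℕ, Hset x y x (k+1)) ∪ ⋃ k : ℕ, Hset x y y (k+1)) := by
          rw [hN, add_zero]
    rw [hU] at hone
    rw [← hone]
    congr 1
    · exact tsum_congr fun k => (measure_Hset p P hp0 hP hcyl hS x y x x k).symm
    · exact tsum_congr fun k => (measure_Hset p P hp0 hP hcyl hS x y x y k).symm
  -- the key inequality from telescoping
  have hineq : ENNReal.ofReal (π x) * (∑' k, ENNReal.ofReal (a k)) +
      ENNReal.ofReal (π y) * (∑' k, ENNReal.ofReal (c k)) ≤ ENNReal.ofReal (π x) := by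
    rw [← ENNReal.tsum_mul_left, ← ENNReal.tsum_mul_left, ← ENNReal.tsum_add]
    have hterm : ∀ k : ℕ, ENNReal.ofReal (π x) * ENNReal.ofReal (a k) +
        ENNReal.ofReal (π y) * ENNReal.ofReal (c k) = ENNReal.ofReal (ρ k x) := by
      intro k
      rw [← ENNReal.ofReal_mul (hπ0 x), ← ENNReal.ofReal_mul (hπ0 y),
        ← ENNReal.ofReal_add (mul_nonneg (hπ0 x) (pathSum_nonneg hp0 _ _ _ _ _))
          (mul_nonneg (hπ0 y) (pathSum_nonneg hp0 _ _ _ _ _))]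
    rw [tsum_congr hterm, ENNReal.tsum_eq_iSup_sum]
    refine iSup_le fun s => ?_
    obtain ⟨n, hn⟩ := s.exists_nat_subset_range
    calc ∑ k ∈ s, ENNReal.ofReal (ρ k x) ≤ ∑ k ∈ Finset.range n, ENNReal.ofReal (ρ k x) :=
        Finset.sum_le_sum_of_subset_of_nonneg hn fun k _ _ => zero_le
    _ = ENNReal.ofReal (∑ k ∈ Finset.range n, ρ k x) :=
        (ENNReal.ofReal_sum_of_nonneg fun k _ => hρnn k x).symm
    _ ≤ ENNReal.ofReal (π x) := ENNReal.ofReal_le_ofReal (bound n)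
  -- conclude
  have hsplitx : ENNReal.ofReal (π x) = ENNReal.ofReal (π x) * (∑' k, ENNReal.ofReal (a k)) +
      ENNReal.ofReal (π x) * (∑' k, ENNReal.ofReal (b k)) := by
    rw [← mul_add, hfull, mul_one]
  have hAne : ENNReal.ofReal (π x) * (∑' k, ENNReal.ofReal (a k)) ≠ ⊤ := by
    have hle : ENNReal.ofReal (π x) * (∑' k, ENNReal.ofReal (a k)) ≤ ENNReal.ofReal (π x) := by
      conv_rhs => rw [hsplitx]
      exact le_self_add
    exact ne_top_of_le_ne_top ENNReal.ofReal_ne_top hle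
  rw [hPx, hPy]
  have h2 : ENNReal.ofReal (π x) * (∑' k, ENNReal.ofReal (a k)) +
      ENNReal.ofReal (π y) * (∑' k, ENNReal.ofReal (c k)) ≤
      ENNReal.ofReal (π x) * (∑' k, ENNReal.ofReal (a k)) +
      ENNReal.ofReal (π x) * (∑' k, ENNReal.ofReal (b k)) := by
    rw [← hsplitx]
    exact hineq
  exact (ENNReal.add_le_add_iff_left hAne).1 h2

end Meas
end DBaux

/-- **Detailed balance of escape probabilities.** For an irreducible, positive recurrent
Markov chain on a finite state space `S` with transition kernel `p` and stationary
distribution `π`, for all states `x, y`: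
`π(x)·P_x(τ̄_y < τ̄_x) = π(y)·P_y(τ̄_x < τ̄_y)`.
The chain is encoded by its family of path measures `P x` on `ℕ → S` (start at `x`),
determined on cylinder sets by the kernel `p`. -/
theorem detailed_balance_return_times
    {S : Type*} [Fintype S] [DecidableEq S] [Nonempty S] [MeasurableSpace S]
    (p : S → S → ℝ) (hp0 : ∀ x y, 0 ≤ p x y) (hp1 : ∀ x, ∑ y, p x y = 1)
    (P : S → Measure (ℕ → S)) (hP : ∀ x, IsProbabilityMeasure (P x))
    (hcyl : ∀ (x : S) (γ : ℕ → S) (n : ℕ),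
      P x {ω | ∀ i ≤ n, ω i = γ i} =
        if γ 0 = x then ENNReal.ofReal (∏ i ∈ Finset.range n, p (γ i) (γ (i+1))) else 0)
    (hirr : ∀ x y : S, ∃ n : ℕ, 0 < P x {ω | ω n = y})
    (hrec : ∀ x : S, ∫⁻ ω, (returnTime {x} ω : ℝ≥0∞) ∂ P x < ⊤)
    (π : S → ℝ) (hπ0 : ∀ x, 0 ≤ π x) (hπ1 : ∑ x, π x = 1)
    (hstat : ∀ y, ∑ x, π x * p x y = π y) :
    ∀ x y : S,
      ENNReal.ofReal (π x) * P x {ω | returnTime {y} ω < returnTime {x} ω} =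
      ENNReal.ofReal (π y) * P y {ω | returnTime {x} ω < returnTime {y} ω} := by
  intro x y
  by_cases hxy : x = y
  · subst hxy
    have hempty : {ω : ℕ → S | returnTime {x} ω < returnTime {x} ω} = ∅ := by
      ext ω; simp
    rw [hempty]
  · have h1 := key_ineq p P hp0 hP hcyl π hπ0 hstat x y hxy (hrec x)
    have h2 := key_ineq p P hp0 hP hcyl π hπ0 hstat y x (Ne.symm hxy) (hrec y)
    exact le_antisymm h2 h1
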